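/- Let D ⊂ ℝ² be a closed rectangle with vertical sides A₀, A₁ and horizontal sides B₀, B₁, and let S ⊆ D be a compact set. If S contains no connected component intersecting both B₀ and B₁, then there exists a continuous curve γ : [0,1] → D with γ(0) ∈ A₀, γ(1) ∈ A₁, and γ(t) ∉ S ∪ B₀ ∪ B₁ for all t ∈ [0,1]. -/

import Mathlib

open Set


namespace Maze

inductive Dir : Type | up | rgt | dwn | lft
deriving DecidableEq

instance : Fintype Dir := ⟨{.up, .rgt, .dwn, .lft}, fun d => by cases d <;> simp⟩

def Dir.vec : Dir → ℤ × ℤ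
  | .up => (0,1) | .rgt => (1,0) | .dwn => (0,-1) | .lft => (-1,0)

def Dir.rt : Dir → Dir
  | .up => .rgt | .rgt => .dwn | .dwn => .lft | .lft => .up

def Dir.lt : Dir → Dir
  | .up => .lft | .lft => .dwn | .dwn => .rgt | .rgt => .up

@[simp] lemma Dir.rt_lt (d : Dir) : d.lt.rt = d := by cases d <;> rfl
@[simp] lemma Dir.lt_rt (d : Dir) : d.rt.lt = d := by cases d <;> rfl
@[simp] lemma Dir.vec_lt (d : Dir) : d.lt.vec = -d.rt.vec := by cases d <;> rfl
@[simp] lemma Dir.vec_rt_rt (d : Dir) : d.rt.rt.vec = -d.vec := by cases d <;> rfl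

lemma Dir.vec_bound (d : Dir) : |d.vec.1| ≤ 1 ∧ |d.vec.2| ≤ 1 := by cases d <;> simp [Dir.vec]

section Grid

variable (n : ℤ) (black red : ℤ × ℤ → Prop)

def inGrid (c : ℤ × ℤ) : Prop := 0 ≤ c.1 ∧ c.1 < n ∧ 0 ≤ c.2 ∧ c.2 < n

def solid (c : ℤ × ℤ) : Prop := c.2 < 0 ∨ (inGrid n c ∧ (black c ∨ red c))

abbrev St := (ℤ × ℤ) × Dir

attribute [local instance] Classical.propDecidable

def wall (s : St) : ℤ × ℤ := s.1 + s.2.rt.vec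

def valid (s : St) : Prop := ¬ solid n black red s.1 ∧ solid n black red (wall s)

noncomputable def succ (s : St) : St :=
  if solid n black red (s.1 + s.2.vec) then (s.1, s.2.lt)
  else if solid n black red (s.1 + s.2.vec + s.2.rt.vec) then (s.1 + s.2.vec, s.2)
  else (s.1 + s.2.vec + s.2.rt.vec, s.2.rt)

noncomputable def pred (s : St) : St :=
  if solid n black red (s.1 - s.2.vec) then (s.1, s.2.rt)
  else if solid n black red (s.1 - s.2.vec + s.2.rt.vec) then (s.1 - s.2.vec, s.2)
  else (s.1 - s.2.vec + s.2.rt.vec, s.2.lt)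

variable {n black red}

lemma valid_succ {s : St} (h : valid n black red s) : valid n black red (succ n black red s) := by
  obtain ⟨h1, h2⟩ := h
  unfold succ
  split_ifs with c1 c2
  · exact ⟨h1, by simpa [wall] using c1⟩
  · exact ⟨c1, by simpa [wall] using c2⟩
  · refine ⟨c2, ?_⟩
    simp only [wall, Dir.vec_rt_rt]
    simpa [add_assoc, wall] using h2

lemma pred_succ {s : St} (h : valid n black red s) : pred n black red (succ n black red s) = s := by
  obtain ⟨c, d⟩ := s
  obtain ⟨h1, h2⟩ := h
  have hw : solid n black red (c + d.rt.vec) := h2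
  simp only [succ]
  split_ifs with c1 c2
  · -- turn left in place
    simp only [pred, Dir.rt_lt, Dir.vec_lt, sub_neg_eq_add]
    rw [if_pos hw]
  · -- move forward
    have e : c + d.vec - d.vec = c := by ring
    simp only [pred, e]
    rw [if_neg h1, if_pos hw]
  · -- diagonal move, turn right
    have e1 : c + d.vec + d.rt.vec - d.rt.vec = c + d.vec := by ring
    have e2 : c + d.vec + d.rt.rt.vec = c := by rw [Dir.vec_rt_rt]; ring
    simp only [pred, Dir.lt_rt, e1, Dir.vec_rt_rt]
    rw [if_neg c1, if_neg (by rw [show c + d.vec + -d.vec = c by ring]; exact h1),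
      show c + d.vec + -d.vec = c by ring]

lemma succ_inj {s t : St} (hs : valid n black red s) (ht : valid n black red t)
    (h : succ n black red s = succ n black red t) : s = t := by
  rw [← pred_succ hs, ← pred_succ ht, h]

lemma succ_cases (s : St) :
    succ n black red s = (s.1, s.2.lt) ∨ succ n black red s = (s.1 + s.2.vec, s.2) ∨
      succ n black red s = (s.1 + s.2.vec + s.2.rt.vec, s.2.rt) := by
  unfold succ; split_ifs <;> simp

lemma succ_pos_bound (s : St) :
    |(succ n black red s).1.1 - s.1.1| ≤ 1 ∧ |(succ n black red s).1.2 - s.1.2| ≤ 1 := by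
  rcases succ_cases (black := black) (red := red) s with h | h | h <;> rw [h] <;>
    cases s.2 <;> simp [Dir.vec, Dir.rt, Prod.fst_add, Prod.snd_add]

variable (n black red) in
def blackish (w : ℤ × ℤ) : Prop := w.2 < 0 ∨ (inGrid n w ∧ black w)

variable (hn : 2 ≤ n)
  (hb : ∀ i : ℤ, 0 ≤ i → i < n → black (i, 0))
  (hr : ∀ i : ℤ, 0 ≤ i → i < n → red (i, n-1))
  (hsep : ∀ c c' : ℤ × ℤ, black c → red c' → |c.1 - c'.1| ≤ 1 → |c.2 - c'.2| ≤ 1 → False)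

section
include hb hsep

lemma blackish_step {w w' : ℤ × ℤ} (hw : blackish n black w) (hw' : solid n black red w')
    (h1 : |w'.1 - w.1| ≤ 1) (h2 : |w'.2 - w.2| ≤ 1) : blackish n black w' := by
  rw [abs_le] at h1 h2
  rcases hw' with h | ⟨hg, hbr⟩
  · exact Or.inl h
  rcases hbr with hblk | hred
  · exact Or.inr ⟨hg, hblk⟩
  exfalso
  rcases hw with hfl | ⟨hg2, hblk2⟩
  · obtain ⟨g1, g2, g3, g4⟩ := hg
    obtain ⟨a, b⟩ := w'
    simp only [Prod.fst, Prod.snd] at g1 g2 g3 h1 h2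
    have h0 : b = 0 := by omega
    subst h0
    exact hsep (a,0) (a,0) (hb a g1 g2) hred (by simp) (by simp)
  · exact hsep w w' hblk2 hred (by rw [abs_le]; constructor <;> omega)
      (by rw [abs_le]; constructor <;> omega)

lemma blackish_wall_succ {s : St} (hv : valid n black red s)
    (hw : blackish n black (wall s)) : blackish n black (wall (succ n black red s)) := by
  have hv' := valid_succ hv
  have hsolid : solid n black red (wall (succ n black red s)) := hv'.2
  refine blackish_step (black := black) (red := red) hb hsep hw hsolid ?_ ?_ <;>
  · rcases succ_cases (n := n) (black := black) (red := red) s with h | h | h <;>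
      rw [h] <;> simp only [wall] <;> cases s.2 <;>
      simp [Dir.vec, Dir.rt, Dir.lt, Prod.fst_add, Prod.snd_add]
end

def start : St := ((-1, 0), Dir.up)

variable (n black red) in
noncomputable def orb (k : ℕ) : St := (succ n black red)^[k] start

lemma orb_zero : orb n black red 0 = start := rfl

lemma orb_succ (k : ℕ) : orb n black red (k+1) = succ n black red (orb n black red k) :=
  Function.iterate_succ_apply' _ _ _

lemma valid_j_nonneg {s : St} (hv : valid n black red s) : 0 ≤ s.1.2 := by
  by_contra h
  exact hv.1 (Or.inl (by omega))

section
include hn hb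

lemma solid_bottom (i : ℤ) (h1 : 0 ≤ i) (h2 : i < n) : solid n black red (i, 0) :=
  Or.inr ⟨⟨h1, h2, le_refl 0, by omega⟩, Or.inl (hb i h1 h2)⟩

lemma valid_start : valid n black red start := by
  constructor
  · rintro (h | ⟨⟨h1, _⟩, _⟩)
    · exact absurd h (by norm_num [start])
    · norm_num [start] at h1
  · show solid n black red ((-1, 0) + Dir.up.rt.vec)
    have : ((-1, 0) : ℤ × ℤ) + Dir.up.rt.vec = (0, 0) := by
      simp [Dir.rt, Dir.vec]
    rw [this]
    exact solid_bottom hn hb 0 le_rfl (by omega)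

lemma orb_valid (k : ℕ) : valid n black red (orb n black red k) := by
  induction k with
  | zero => exact valid_start hn hb
  | succ k ih => rw [orb_succ]; exact valid_succ ih

lemma succ_i_ge {s : St} (hv : valid n black red s) (h : -1 ≤ s.1.1) :
    -1 ≤ (succ n black red s).1.1 := by
  rcases le_or_gt 0 s.1.1 with hi | hi
  · have := (succ_pos_bound (n := n) (black := black) (red := red) s).1
    rw [abs_le] at this
    omega
  · have hi' : s.1.1 = -1 := by omega
    have hj : 0 ≤ s.1.2 := valid_j_nonneg hv
    obtain ⟨⟨i, j⟩, d⟩ := s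
    simp only at hi' hj
    subst hi'
    obtain ⟨h1, h2⟩ := hv
    cases d
    case up =>
      rcases succ_cases (n := n) (black := black) (red := red) ((-1, j), Dir.up)
        with hc | hc | hc <;> rw [hc] <;> simp [Dir.vec, Dir.rt]
    case rgt =>
      rcases succ_cases (n := n) (black := black) (red := red) ((-1, j), Dir.rgt)
        with hc | hc | hc <;> rw [hc] <;> simp [Dir.vec, Dir.rt]
    case dwn =>
      exfalso
      rcases h2 with hf | ⟨⟨g1, _⟩, _⟩
      · simp [wall, Dir.rt, Dir.vec] at hf; omega
      · simp [wall, Dir.rt, Dir.vec] at g1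
    case lft =>
      exfalso
      rcases h2 with hf | ⟨⟨g1, _⟩, _⟩
      · simp [wall, Dir.rt, Dir.vec] at hf; omega
      · simp [wall, Dir.rt, Dir.vec] at g1

lemma orb_i_ge (k : ℕ) : -1 ≤ (orb n black red k).1.1 := by
  induction k with
  | zero => norm_num [orb_zero, start]
  | succ k ih => rw [orb_succ]; exact succ_i_ge hn hb (orb_valid hn hb k) ih

end

section
include hn hb hr hsep

lemma orb_wall_blackish (k : ℕ) : blackish n black (wall (orb n black red k)) := by
  induction k with
  | zero =>
    have : wall (orb n black red 0) = (0, 0) := by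
      show ((-1, 0) : ℤ × ℤ) + Dir.up.rt.vec = (0, 0)
      simp [Dir.rt, Dir.vec]
    rw [this]
    exact Or.inr ⟨⟨le_rfl, by omega, le_rfl, by omega⟩, hb 0 le_rfl (by omega)⟩
  | succ k ih =>
    rw [orb_succ]
    exact blackish_wall_succ hb hsep (orb_valid hn hb k) ih

lemma orb_j_le (k : ℕ) : (orb n black red k).1.2 ≤ n - 1 := by
  have hbl := orb_wall_blackish hn hb hr hsep k
  set s := orb n black red k with hs
  have hd : |s.1.2 - (wall s).2| ≤ 1 := by
    obtain ⟨c, d⟩ := s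
    simp only [wall]
    cases d <;> simp [Dir.rt, Dir.vec]
  rw [abs_le] at hd
  rcases hbl with hf | ⟨⟨_, _, _, g4⟩, hblk⟩
  · omega
  · -- wall is a black grid cell; it cannot be in the top row
    have : (wall s).2 ≠ n - 1 := by
      intro htop
      refine hsep (wall s) (wall s) hblk ?_ (by simp) (by simp)
      have := hr (wall s).1 (by omega) (by omega)
      rwa [show ((wall s).1, n - 1) = wall s by rw [← htop]] at this
    omega

end

def ghost (k : ℕ) : St := ((-1 - (k : ℤ), 0), Dir.rgt)

lemma valid_ghost (k : ℕ) : valid n black red (ghost k) := by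
  constructor
  · rintro (h | ⟨⟨h1, _⟩, _⟩)
    · exact absurd h (by simp [ghost])
    · simp [ghost] at h1; omega
  · left
    simp [wall, ghost, Dir.rt, Dir.vec]

section
include hn hb

lemma succ_ghost_zero : succ n black red (ghost 0) = start := by
  have hfront : ((-1 - ((0:ℕ) : ℤ), (0:ℤ)) + Dir.rgt.vec) = ((0 : ℤ), (0 : ℤ)) := by
    simp [Dir.vec]
  unfold succ ghost
  rw [if_pos (by rw [hfront]; exact solid_bottom hn hb 0 le_rfl (by omega))]
  simp [start, Dir.lt]

lemma succ_ghost (k : ℕ) : succ n black red (ghost (k+1)) = ghost k := by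
  have hfront : ((-1 - ((k+1:ℕ) : ℤ), (0:ℤ)) + Dir.rgt.vec) = (-1 - (k : ℤ), 0) := by
    simp [Dir.vec, Prod.ext_iff]; push_cast; ring
  unfold succ ghost
  rw [hfront]
  rw [if_neg ?hfree, if_pos ?hdiag]
  case hfree =>
    rintro (h | ⟨⟨h1, _⟩, _⟩)
    · simp at h
    · simp at h1; omega
  case hdiag =>
    left
    simp [Dir.rt, Dir.vec]

end

section
include hn hb hr hsep

lemma orb_cancel (a q : ℕ) (h : orb n black red (a + q) = orb n black red a) :
    orb n black red q = start := by
  induction a with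
  | zero => simpa [orb_zero] using h
  | succ a ih =>
    apply ih
    have e1 : orb n black red (a + 1 + q) = succ n black red (orb n black red (a + q)) := by
      rw [show a + 1 + q = (a + q) + 1 by omega, orb_succ]
    rw [e1, orb_succ] at h
    exact succ_inj (orb_valid hn hb _) (orb_valid hn hb _) h

lemma exists_exit : ∃ k, n ≤ (orb n black red k).1.1 := by
  by_contra hno
  push_neg at hno
  set F : Finset St := (Finset.Icc ((-1 : ℤ), (0:ℤ)) (n-1, n-1)) ×ˢ (Finset.univ : Finset Dir)
    with hF
  have hmaps : ∀ k : ℕ, orb n black red k ∈ F := by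
    intro k
    have h1 := orb_i_ge (red := red) hn hb k
    have h2 := hno k
    have h3 := valid_j_nonneg (orb_valid (red := red) hn hb k)
    have h4 := orb_j_le hn hb hr hsep k
    simp only [hF, Finset.mem_product, Finset.mem_Icc, Finset.mem_univ, and_true, Prod.le_def]
    exact ⟨⟨by simpa using h1, by simpa using h3⟩, by simpa using by omega, by simpa using h4⟩
  obtain ⟨a, -, b, -, hab, heq⟩ :=
    Finset.exists_ne_map_eq_of_card_lt_of_maps_to
      (s := Finset.range (F.card + 1)) (by simp) (fun k _ => hmaps k)
  -- get q ≥ 1 with orb q = start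
  obtain ⟨q, hq1, hq⟩ : ∃ q : ℕ, 1 ≤ q ∧ orb n black red q = start := by
    rcases Nat.lt_or_ge a b with h | h
    · exact ⟨b - a, by omega, orb_cancel hn hb hr hsep a (b - a)
        (by rw [show a + (b - a) = b by omega]; exact heq.symm)⟩
    · have h' : b < a := by omega
      exact ⟨a - b, by omega, orb_cancel hn hb hr hsep b (a - b)
        (by rw [show b + (a - b) = a by omega]; exact heq)⟩
  have hper : ∀ m : ℕ, orb n black red (m + q) = orb n black red m := by
    intro m
    show (succ n black red)^[m + q] start = _
    rw [Function.iterate_add_apply]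
    show (succ n black red)^[m] (orb n black red q) = _
    rw [hq]; rfl
  have hg : ∀ k : ℕ, ∃ m : ℕ, orb n black red m = ghost k := by
    intro k
    induction k with
    | zero =>
      refine ⟨q - 1, ?_⟩
      apply succ_inj (orb_valid hn hb _) (valid_ghost _)
      rw [← orb_succ, show q - 1 + 1 = q by omega, hq, succ_ghost_zero hn hb]
    | succ k ih =>
      obtain ⟨m, hm⟩ := ih
      refine ⟨m + q - 1, ?_⟩
      apply succ_inj (orb_valid hn hb _) (valid_ghost _)
      rw [← orb_succ, show m + q - 1 + 1 = m + q by omega, hper, hm, succ_ghost hn hb]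
  obtain ⟨m, hm⟩ := hg 2
  have hge := orb_i_ge (red := red) hn hb m
  rw [hm] at hge
  norm_num [ghost] at hge

end

section
include hn hb hr hsep

theorem discrete_main : ∃ (N : ℕ) (c : ℕ → ℤ × ℤ),
    (∀ t, t ≤ N → inGrid n (c t) ∧ ¬black (c t) ∧ ¬red (c t)) ∧
    (c 0).1 = 0 ∧ (c N).1 = n - 1 ∧
    (∀ t, t < N → |(c (t+1)).1 - (c t).1| ≤ 1 ∧ |(c (t+1)).2 - (c t).2| ≤ 1) := by
  obtain hex := exists_exit hn hb hr hsep
  set K := Nat.find hex with hKdef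
  have hK : n ≤ (orb n black red K).1.1 := Nat.find_spec hex
  have hmin : ∀ m, m < K → (orb n black red m).1.1 < n := by
    intro m hm
    have := Nat.find_min hex hm
    omega
  have hK1 : 1 ≤ K := by
    rcases Nat.eq_zero_or_pos K with h | h
    · exfalso; rw [h] at hK; revert hK; norm_num [orb_zero, start]; omega
    · exact h
  set Q : ℕ → Prop := fun t => (orb n black red t).1.1 ≤ -1 with hQdef
  set t₀ := Nat.findGreatest Q (K-1) with ht₀def
  have hQ0 : Q 0 := by norm_num [hQdef, orb_zero, start]
  have hQt₀ : Q t₀ := Nat.findGreatest_spec (Nat.zero_le _) hQ0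
  have ht₀le : t₀ ≤ K - 1 := Nat.findGreatest_le _
  have hgt : ∀ t, t₀ < t → t ≤ K - 1 → 0 ≤ (orb n black red t).1.1 := by
    intro t h1 h2
    have := Nat.findGreatest_is_greatest (P := Q) h1 h2
    simp only [hQdef] at this
    omega
  have hadj : ∀ m : ℕ, |(orb n black red (m+1)).1.1 - (orb n black red m).1.1| ≤ 1 ∧
      |(orb n black red (m+1)).1.2 - (orb n black red m).1.2| ≤ 1 := by
    intro m
    rw [orb_succ]
    exact succ_pos_bound _
  have hstep1 : (orb n black red (t₀+1)).1.1 ≤ 0 := by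
    have := (hadj t₀).1
    rw [abs_le] at this
    simp only [hQdef] at hQt₀
    omega
  have ht₀1K : t₀ + 1 < K := by
    rcases Nat.lt_or_ge (t₀ + 1) K with h | h
    · exact h
    · exfalso
      have : t₀ + 1 = K := by omega
      rw [← this] at hK
      omega
  refine ⟨K - t₀ - 2, fun t => (orb n black red (t₀ + 1 + t)).1, ?_, ?_, ?_, ?_⟩
  · intro t ht
    have hm1 : t₀ < t₀ + 1 + t := by omega
    have hm2 : t₀ + 1 + t ≤ K - 1 := by omega
    have hi0 := hgt _ hm1 hm2
    have hin := hmin (t₀ + 1 + t) (by omega)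
    have hj0 := valid_j_nonneg (orb_valid (red := red) hn hb (t₀ + 1 + t))
    have hjn := orb_j_le hn hb hr hsep (t₀ + 1 + t)
    have hval := orb_valid (red := red) hn hb (t₀ + 1 + t)
    have hgrid : inGrid n (orb n black red (t₀ + 1 + t)).1 := ⟨hi0, hin, hj0, by omega⟩
    refine ⟨hgrid, ?_, ?_⟩
    · intro hblk; exact hval.1 (Or.inr ⟨hgrid, Or.inl hblk⟩)
    · intro hred; exact hval.1 (Or.inr ⟨hgrid, Or.inr hred⟩)
  · show (orb n black red (t₀ + 1 + 0)).1.1 = 0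
    rw [Nat.add_zero]
    have h1 := hgt (t₀ + 1) (by omega) (by omega)
    omega
  · beta_reduce
    have e : t₀ + 1 + (K - t₀ - 2) = K - 1 := by omega
    rw [e]
    have h1 := hmin (K-1) (by omega)
    have h2 := (hadj (K-1)).1
    rw [abs_le] at h2
    have e2 : K - 1 + 1 = K := by omega
    rw [e2] at h2
    omega
  · intro t ht
    beta_reduce
    have e : t₀ + 1 + (t + 1) = (t₀ + 1 + t) + 1 := by omega
    rw [e]
    exact hadj _

end

end Grid
end Maze



lemma clopen_separation {X : Type*} [TopologicalSpace X] [T2Space X] [CompactSpace X]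
    {F₀ F₁ : Set X} (h₀ : IsClosed F₀) (h₁ : IsClosed F₁)
    (hcc : ∀ x ∈ F₀, Disjoint (connectedComponent x) F₁) :
    ∃ U : Set X, IsClopen U ∧ F₀ ⊆ U ∧ Disjoint U F₁ := by
  classical
  have key : ∀ x ∈ F₀, ∃ U : Set X, IsClopen U ∧ x ∈ U ∧ Disjoint U F₁ := by
    intro x hx
    have hempty : F₁ ∩ ⋂ (s : { s : Set X // IsClopen s ∧ x ∈ s }), s.1 = ∅ := by
      rw [← connectedComponent_eq_iInter_isClopen x]
      exact Set.disjoint_iff_inter_eq_empty.mp ((hcc x hx).symm)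
    obtain ⟨t, ht⟩ := h₁.isCompact.elim_finite_subfamily_closed
      (fun s : { s : Set X // IsClopen s ∧ x ∈ s } => s.1) (fun s => s.2.1.1) hempty
    refine ⟨⋂ s ∈ t, (s : { s : Set X // IsClopen s ∧ x ∈ s }).1,
      isClopen_biInter_finset fun s _ => s.2.1, mem_iInter₂.mpr fun s _ => s.2.2, ?_⟩
    rw [Set.disjoint_iff_inter_eq_empty, inter_comm]
    exact ht
  choose! U hU₁ hU₂ hU₃ using key
  have hcover : F₀ ⊆ ⋃ x ∈ F₀, U x := fun x hx => mem_biUnion hx (hU₂ x hx)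
  obtain ⟨t, hts, htfin, htcov⟩ := h₀.isCompact.elim_finite_subcover_image
    (fun x hx => (hU₁ x hx).2) hcover
  exact ⟨⋃ x ∈ t, U x, htfin.isClopen_biUnion (fun x hx => hU₁ x (hts hx)), htcov,
    Set.disjoint_iUnion₂_left.mpr fun x hx => hU₃ x (hts hx)⟩

lemma compact_split {S B₀ B₁ : Set (ℝ × ℝ)} (hS : IsCompact S)
    (hB₀ : IsClosed B₀) (hB₁ : IsClosed B₁)
    (hcomp : ¬ ∃ C : Set (ℝ × ℝ), C ⊆ S ∧ IsConnected C ∧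
      (C ∩ B₀).Nonempty ∧ (C ∩ B₁).Nonempty) :
    ∃ S₀ S₁ : Set (ℝ × ℝ), IsCompact S₀ ∧ IsCompact S₁ ∧ S₀ ∪ S₁ = S ∧
      Disjoint S₀ S₁ ∧ S ∩ B₀ ⊆ S₀ ∧ S ∩ B₁ ⊆ S₁ := by
  haveI : CompactSpace ↥S := isCompact_iff_compactSpace.mp hS
  set F₀ : Set ↥S := Subtype.val ⁻¹' B₀ with hF₀
  set F₁ : Set ↥S := Subtype.val ⁻¹' B₁ with hF₁
  have hcc : ∀ x ∈ F₀, Disjoint (connectedComponent x) F₁ := by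
    intro x hx
    rw [Set.disjoint_iff_inter_eq_empty]
    by_contra hne
    obtain ⟨y, hy1, hy2⟩ := Set.nonempty_iff_ne_empty.mpr hne
    refine hcomp ⟨Subtype.val '' connectedComponent x, ?_, ?_, ?_, ?_⟩
    · rintro z ⟨w, _, rfl⟩; exact w.2
    · exact (isConnected_connectedComponent).image _ continuous_subtype_val.continuousOn
    · exact ⟨x.1, ⟨x, mem_connectedComponent, rfl⟩, hx⟩
    · exact ⟨y.1, ⟨y, hy1, rfl⟩, hy2⟩
  obtain ⟨U, hUclopen, hUsub, hUdisj⟩ := clopen_separation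
    (hB₀.preimage continuous_subtype_val) (hB₁.preimage continuous_subtype_val) hcc
  refine ⟨Subtype.val '' U, Subtype.val '' Uᶜ, ?_, ?_, ?_, ?_, ?_, ?_⟩
  · exact (hUclopen.1.isCompact).image continuous_subtype_val
  · exact (hUclopen.2.isClosed_compl.isCompact).image continuous_subtype_val
  · rw [← image_union, union_compl_self, Subtype.coe_image_univ]
  · exact (Set.disjoint_image_iff Subtype.val_injective).mpr disjoint_compl_right
  · rintro z ⟨hzS, hzB⟩
    exact ⟨⟨z, hzS⟩, hUsub hzB, rfl⟩
  · rintro z ⟨hzS, hzB⟩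
    refine ⟨⟨z, hzS⟩, fun hmem => ?_, rfl⟩
    exact hUdisj.ne_of_mem hmem hzB rfl



section Aux

lemma chain_union_connected {α : Type*} [TopologicalSpace α] (f : ℕ → Set α)
    (hconn : ∀ t, IsConnected (f t)) :
    ∀ N : ℕ, (∀ t < N, (f t ∩ f (t+1)).Nonempty) →
      IsConnected (⋃ t ∈ Finset.range (N+1), f t) := by
  intro N
  induction N with
  | zero => intro _; simpa using hconn 0
  | succ N ih =>
    intro hh
    rw [Finset.range_add_one, Finset.set_biUnion_insert]
    obtain ⟨x, hx1, hx2⟩ := hh N (by omega)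
    exact (hconn (N+1)).union
      ⟨x, hx2, mem_biUnion (Finset.self_mem_range_succ N) hx1⟩
      (ih (fun t ht => hh t (by omega)))

end Aux


theorem stmt2
    (x₀ x₁ y₀ y₁ : ℝ) (hx : x₀ < x₁) (hy : y₀ < y₁)
    (D : Set (ℝ × ℝ)) (hD : D = Icc x₀ x₁ ×ˢ Icc y₀ y₁)
    (A₀ A₁ B₀ B₁ : Set (ℝ × ℝ))
    (hA₀ : A₀ = {x₀} ×ˢ Icc y₀ y₁) (hA₁ : A₁ = {x₁} ×ˢ Icc y₀ y₁)
    (hB₀ : B₀ = Icc x₀ x₁ ×ˢ {y₀}) (hB₁ : B₁ = Icc x₀ x₁ ×ˢ {y₁})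
    (S : Set (ℝ × ℝ)) (hSD : S ⊆ D) (hS : IsCompact S)
    (hcomp : ¬ ∃ C : Set (ℝ × ℝ), C ⊆ S ∧ IsConnected C ∧
      (C ∩ B₀).Nonempty ∧ (C ∩ B₁).Nonempty) :
    ∃ γ : ℝ → ℝ × ℝ, ContinuousOn γ (Icc 0 1) ∧
      γ 0 ∈ A₀ ∧ γ 1 ∈ A₁ ∧
      ∀ t ∈ Icc (0:ℝ) 1, γ t ∈ D ∧ γ t ∉ S ∪ B₀ ∪ B₁ := by
  have hB₀closed : IsClosed B₀ := by rw [hB₀]; exact isClosed_Icc.prod isClosed_singleton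
  have hB₁closed : IsClosed B₁ := by rw [hB₁]; exact isClosed_Icc.prod isClosed_singleton
  have hB₀compact : IsCompact B₀ := by rw [hB₀]; exact isCompact_Icc.prod isCompact_singleton
  have hB₁compact : IsCompact B₁ := by rw [hB₁]; exact isCompact_Icc.prod isCompact_singleton
  obtain ⟨S₀, S₁, hS₀c, hS₁c, hunion, hdisj, hSB₀, hSB₁⟩ :=
    compact_split hS hB₀closed hB₁closed hcomp
  set K₀ : Set (ℝ × ℝ) := S₀ ∪ B₀ with hK₀def
  set K₁ : Set (ℝ × ℝ) := S₁ ∪ B₁ with hK₁def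
  have hS₀S : S₀ ⊆ S := hunion ▸ subset_union_left
  have hS₁S : S₁ ⊆ S := hunion ▸ subset_union_right
  have hK₀c : IsCompact K₀ := hS₀c.union hB₀compact
  have hK₁c : IsCompact K₁ := hS₁c.union hB₁compact
  have hKdisj : Disjoint K₀ K₁ := by
    rw [Set.disjoint_left]
    rintro p (hp | hp) (hq | hq)
    · exact hdisj.ne_of_mem hp hq rfl
    · exact hdisj.ne_of_mem hp (hSB₁ ⟨hS₀S hp, hq⟩) rfl
    · exact hdisj.ne_of_mem (hSB₀ ⟨hS₁S hq, hp⟩) hq rfl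
    · rw [hB₀] at hp; rw [hB₁] at hq
      have := hp.2; have := hq.2
      simp only [mem_singleton_iff] at *
      have : y₀ = y₁ := by rw [← hp.2, hq.2]
      exact absurd this (ne_of_lt hy)
  have hK₁ne : K₁.Nonempty := ⟨(x₀, y₁), Or.inr (by rw [hB₁]; exact ⟨⟨le_rfl, hx.le⟩, rfl⟩)⟩
  have hK₀ne : K₀.Nonempty := ⟨(x₀, y₀), Or.inr (by rw [hB₀]; exact ⟨⟨le_rfl, hx.le⟩, rfl⟩)⟩
  -- a positive distance between K₀ and K₁
  obtain ⟨p₀, hp₀, hmin⟩ := hK₀c.exists_isMinOn hK₀ne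
    (Metric.continuous_infDist_pt K₁).continuousOn
  set d : ℝ := Metric.infDist p₀ K₁ with hddef
  have hd0 : 0 < d := by
    rw [hddef]
    refine (hK₁c.isClosed.notMem_iff_infDist_pos hK₁ne).mp ?_
    exact fun hmem => hKdisj.ne_of_mem hp₀ hmem rfl
  have hdist : ∀ p ∈ K₀, ∀ q ∈ K₁, d ≤ dist p q := fun p hp q hq =>
    (hmin hp).trans (Metric.infDist_le_dist_of_mem hq)
  -- choose the grid size
  obtain ⟨n, hnbig⟩ := exists_nat_gt (max 2 (max ((x₁ - x₀) * 2 / d) ((y₁ - y₀) * 2 / d)))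
  have hn2 : (2:ℝ) < n := lt_of_le_of_lt (le_max_left _ _) hnbig
  have hnpos : (0:ℝ) < n := by linarith
  set w : ℝ := (x₁ - x₀) / n with hwdef
  set hh : ℝ := (y₁ - y₀) / n with hhdef
  have hw0 : 0 < w := div_pos (by linarith) hnpos
  have hh0 : 0 < hh := div_pos (by linarith) hnpos
  have hwd : 2 * w < d := by
    have h1 : (x₁ - x₀) * 2 / d < n := lt_of_le_of_lt (le_trans (le_max_left _ _) (le_max_right _ _)) hnbig
    rw [div_lt_iff₀ hd0] at h1
    rw [hwdef]
    rw [mul_div_assoc']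
    rw [div_lt_iff₀ hnpos]
    nlinarith
  have hhd : 2 * hh < d := by
    have h1 : (y₁ - y₀) * 2 / d < n := lt_of_le_of_lt (le_trans (le_max_right _ _) (le_max_right _ _)) hnbig
    rw [div_lt_iff₀ hd0] at h1
    rw [hhdef, mul_div_assoc', div_lt_iff₀ hnpos]
    nlinarith
  -- the grid
  set X : ℤ → ℝ := fun i => x₀ + i * w with hXdef
  set Y : ℤ → ℝ := fun j => y₀ + j * hh with hYdef
  have hXmono : ∀ {a b : ℤ}, a ≤ b → X a ≤ X b := by
    intro a b hab
    simp only [hXdef]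
    have : (a:ℝ) ≤ b := by exact_mod_cast hab
    nlinarith
  have hYmono : ∀ {a b : ℤ}, a ≤ b → Y a ≤ Y b := by
    intro a b hab
    simp only [hYdef]
    have : (a:ℝ) ≤ b := by exact_mod_cast hab
    nlinarith
  have hX0 : X 0 = x₀ := by simp [hXdef]
  have hY0 : Y 0 = y₀ := by simp [hYdef]
  have hXn : X n = x₁ := by
    simp only [hXdef, hwdef]
    field_simp
    push_cast; ring
  have hYn : Y n = y₁ := by
    simp only [hYdef, hhdef]
    field_simp
    push_cast; ring
  set cell : ℤ × ℤ → Set (ℝ × ℝ) :=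
    fun c => Icc (X c.1) (X (c.1+1)) ×ˢ Icc (Y c.2) (Y (c.2+1)) with hcelldef
  set blk : ℤ × ℤ → Prop := fun c => (cell c ∩ K₀).Nonempty with hblkdef
  set red : ℤ × ℤ → Prop := fun c => (cell c ∩ K₁).Nonempty with hreddef
  have hcorner : ∀ c : ℤ × ℤ, (X c.1, Y c.2) ∈ cell c := by
    intro c
    exact ⟨⟨le_rfl, hXmono (by omega)⟩, ⟨le_rfl, hYmono (by omega)⟩⟩
  have hXrange : ∀ i : ℤ, 0 ≤ i → i ≤ n → X i ∈ Icc x₀ x₁ :=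
    fun i h1 h2 => ⟨hX0 ▸ hXmono h1, hXn ▸ hXmono h2⟩
  have hb : ∀ i : ℤ, 0 ≤ i → i < (n:ℤ) → blk (i, 0) := by
    intro i h1 h2
    refine ⟨(X i, Y 0), hcorner _, Or.inr ?_⟩
    rw [hB₀, hY0]
    exact ⟨hXrange i h1 (by omega), rfl⟩
  have hr : ∀ i : ℤ, 0 ≤ i → i < (n:ℤ) → red (i, (n:ℤ) - 1) := by
    intro i h1 h2
    refine ⟨(X i, Y ((n:ℤ) - 1 + 1)), ⟨⟨le_rfl, hXmono (by omega)⟩, ⟨hYmono (by omega), le_rfl⟩⟩,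
      Or.inr ?_⟩
    rw [hB₁]
    have : ((n:ℤ) - 1 + 1) = (n:ℤ) := by omega
    rw [this, hYn]
    exact ⟨hXrange i h1 (by omega), rfl⟩
  have hsep : ∀ c c' : ℤ × ℤ, blk c → red c' → |c.1 - c'.1| ≤ 1 → |c.2 - c'.2| ≤ 1 → False := by
    intro c c' hbl hrd h1 h2
    obtain ⟨p, hpc, hpK⟩ := hbl
    obtain ⟨q, hqc, hqK⟩ := hrd
    have hdle := hdist p hpK q hqK
    have hi : |(c.1 : ℝ) - c'.1| ≤ 1 := by
      have : ((|c.1 - c'.1| : ℤ) : ℝ) ≤ 1 := by exact_mod_cast h1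
      rwa [Int.cast_abs, Int.cast_sub] at this
    have hj : |(c.2 : ℝ) - c'.2| ≤ 1 := by
      have : ((|c.2 - c'.2| : ℤ) : ℝ) ≤ 1 := by exact_mod_cast h2
      rwa [Int.cast_abs, Int.cast_sub] at this
    rw [abs_le] at hi hj
    obtain ⟨⟨hp1, hp2⟩, ⟨hp3, hp4⟩⟩ := hpc
    obtain ⟨⟨hq1, hq2⟩, ⟨hq3, hq4⟩⟩ := hqc
    simp only [hXdef, hYdef] at hp1 hp2 hp3 hp4 hq1 hq2 hq3 hq4
    push_cast at hp1 hp2 hp3 hp4 hq1 hq2 hq3 hq4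
    have key1 : ((c.1:ℝ) - c'.1 + 1) * w ≤ 2 * w :=
      mul_le_mul_of_nonneg_right (by linarith) hw0.le
    have key2 : ((c'.1:ℝ) - c.1 + 1) * w ≤ 2 * w :=
      mul_le_mul_of_nonneg_right (by linarith) hw0.le
    have key3 : ((c.2:ℝ) - c'.2 + 1) * hh ≤ 2 * hh :=
      mul_le_mul_of_nonneg_right (by linarith) hh0.le
    have key4 : ((c'.2:ℝ) - c.2 + 1) * hh ≤ 2 * hh :=
      mul_le_mul_of_nonneg_right (by linarith) hh0.le
    have hx1 : |p.1 - q.1| ≤ 2 * w := by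
      rw [abs_le]
      constructor
      · linarith [key2, hp1, hq2]
      · linarith [key1, hp2, hq1]
    have hy1 : |p.2 - q.2| ≤ 2 * hh := by
      rw [abs_le]
      constructor
      · linarith [key4, hp3, hq4]
      · linarith [key3, hp4, hq3]
    have : dist p q < d := by
      rw [Prod.dist_eq, Real.dist_eq, Real.dist_eq]
      apply max_lt <;> linarith
    linarith
  have hn2' : (2:ℤ) ≤ (n:ℤ) := by exact_mod_cast hn2.le
  obtain ⟨N, ch, hchain, hch0, hchN, hchadj⟩ :=
    Maze.discrete_main hn2' hb hr hsep
  -- cells of the chain are connected, avoid K₀ ∪ K₁ and lie in the open horizontal strip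
  have hcellconn : ∀ c : ℤ × ℤ, IsConnected (cell c) := by
    intro c
    refine ⟨⟨_, hcorner c⟩, ?_⟩
    exact ((convex_Icc _ _).prod (convex_Icc _ _)).isPreconnected
  have hYtop : Y ((n:ℤ) - 1) = y₁ - hh := by
    simp only [hYdef]
    push_cast
    have : y₀ + (n:ℝ) * hh = y₁ := by rw [← hYn]; simp [hYdef]
    ring_nf
    ring_nf at this
    linarith
  have hwhite : ∀ t, t ≤ N → cell (ch t) ⊆ Icc x₀ x₁ ×ˢ Ioo y₀ y₁ ∧
      ∀ u ∈ cell (ch t), u ∉ K₀ ∪ K₁ := by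
    intro t ht
    obtain ⟨⟨hg1, hg2, hg3, hg4⟩, hnb, hnr⟩ := hchain t ht
    have hj1 : 1 ≤ (ch t).2 := by
      rcases eq_or_lt_of_le hg3 with h | h
      · exfalso
        apply hnb
        have : ch t = ((ch t).1, 0) := by rw [Prod.ext_iff]; exact ⟨rfl, h.symm⟩
        rw [this]
        exact hb _ hg1 hg2
      · omega
    have hj2 : (ch t).2 ≤ (n:ℤ) - 2 := by
      rcases eq_or_lt_of_le (show (ch t).2 ≤ (n:ℤ) - 1 by omega) with h | h
      · exfalso
        apply hnr
        have : ch t = ((ch t).1, (n:ℤ) - 1) := by rw [Prod.ext_iff]; exact ⟨rfl, h⟩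
        rw [this]
        exact hr _ hg1 hg2
      · omega
    constructor
    · rintro u ⟨hu1, hu2⟩
      refine ⟨⟨?_, ?_⟩, ?_, ?_⟩
      · exact le_trans (hX0 ▸ hXmono hg1) hu1.1
      · exact le_trans hu1.2 (hXn ▸ hXmono (by omega))
      · have : Y 1 ≤ u.2 := le_trans (hYmono hj1) hu2.1
        have h1 : y₀ < Y 1 := by simp only [hYdef]; push_cast; linarith
        linarith
      · have : u.2 ≤ Y ((n:ℤ) - 1) := le_trans hu2.2 (hYmono (by omega))
        rw [hYtop] at this
        linarith
    · intro u hu hmem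
      rcases hmem with hmem | hmem
      · exact hnb ⟨u, hu, hmem⟩
      · exact hnr ⟨u, hu, hmem⟩
  -- the union of the chain cells
  set U : Set (ℝ × ℝ) := ⋃ t ∈ Finset.range (N+1), cell (ch t) with hUdef
  have hUconn : IsConnected U := by
    refine chain_union_connected _ (fun t => hcellconn _) N ?_
    intro t ht
    obtain ⟨ha1, ha2⟩ := hchadj t ht
    rw [abs_le] at ha1 ha2
    refine ⟨(X (max (ch t).1 (ch (t+1)).1), Y (max (ch t).2 (ch (t+1)).2)), ?_, ?_⟩
    · exact ⟨⟨hXmono (le_max_left _ _), hXmono (by omega)⟩,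
        ⟨hYmono (le_max_left _ _), hYmono (by omega)⟩⟩
    · exact ⟨⟨hXmono (le_max_right _ _), hXmono (by omega)⟩,
        ⟨hYmono (le_max_right _ _), hYmono (by omega)⟩⟩
  -- the clamping map and the open region
  set fc : ℝ × ℝ → ℝ × ℝ := fun p => (max x₀ (min p.1 x₁), p.2) with hfcdef
  have hfc : Continuous fc := by
    apply Continuous.prodMk
    · exact continuous_const.max (continuous_fst.min continuous_const)
    · exact continuous_snd
  set Ω : Set (ℝ × ℝ) := (univ ×ˢ Ioo y₀ y₁) ∩ (fc ⁻¹' (K₀ ∪ K₁)ᶜ) with hΩdef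
  have hΩopen : IsOpen Ω :=
    (isOpen_univ.prod isOpen_Ioo).inter
      (((hK₀c.union hK₁c).isClosed.isOpen_compl).preimage hfc)
  have hUsubΩ : U ⊆ Ω := by
    intro u hu
    rw [hUdef, mem_iUnion₂] at hu
    obtain ⟨t, ht, hu⟩ := hu
    rw [Finset.mem_range] at ht
    obtain ⟨hsub, havoid⟩ := hwhite t (by omega)
    obtain ⟨hu1, hu2⟩ := hsub hu
    have hfix : fc u = u := by
      rw [hfcdef]
      simp only
      rw [min_eq_left hu1.2, max_eq_right hu1.1]
    exact ⟨⟨trivial, hu2⟩, by rw [mem_preimage, hfix]; exact havoid u hu⟩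
  -- endpoints
  set a : ℝ × ℝ := (x₀, Y (ch 0).2) with hadef
  set b : ℝ × ℝ := (x₁, Y (ch N).2) with hbdef
  have haU : a ∈ U := by
    rw [hUdef]
    refine mem_biUnion (show (0:ℕ) ∈ Finset.range (N+1) from Finset.mem_range.mpr (by omega)) ?_
    have : a = (X (ch 0).1, Y (ch 0).2) := by rw [hadef, hch0, hX0]
    rw [this]
    exact hcorner _
  have hbU : b ∈ U := by
    rw [hUdef]
    refine mem_biUnion (Finset.mem_range.mpr (by omega : N < N + 1)) ?_
    have hb1 : b.1 = X ((ch N).1 + 1) := by rw [hbdef, hchN]; rw [show (n:ℤ) - 1 + 1 = (n:ℤ) by omega, hXn]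
    refine ⟨?_, ⟨le_rfl, hYmono (by omega)⟩⟩
    rw [hb1]
    exact ⟨hXmono (show (ch N).1 ≤ (ch N).1 + 1 by omega), le_rfl⟩
  have haΩ : a ∈ Ω := hUsubΩ haU
  have hbΩ : b ∈ Ω := hUsubΩ hbU
  -- the path
  have hbC : b ∈ connectedComponentIn Ω a :=
    (hUconn.isPreconnected.subset_connectedComponentIn haU hUsubΩ) hbU
  have haC : a ∈ connectedComponentIn Ω a := mem_connectedComponentIn haΩ
  have hCopen : IsOpen (connectedComponentIn Ω a) := hΩopen.connectedComponentIn
  have hCconn : IsConnected (connectedComponentIn Ω a) :=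
    isConnected_connectedComponentIn_iff.mpr haΩ
  have hCpath : IsPathConnected (connectedComponentIn Ω a) :=
    hCopen.isConnected_iff_isPathConnected.mp hCconn
  have hJ : JoinedIn Ω a b :=
    (hCpath.joinedIn a haC b hbC).mono (connectedComponentIn_subset Ω a)
  obtain ⟨p, hp⟩ := hJ
  refine ⟨fun t => fc (p (Set.projIcc (0:ℝ) 1 zero_le_one t)), ?_, ?_, ?_, ?_⟩
  · exact (hfc.comp (p.continuous.comp continuous_projIcc)).continuousOn
  · beta_reduce
    have : Set.projIcc (0:ℝ) 1 zero_le_one 0 = 0 := Set.projIcc_left zero_le_one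
    rw [this, p.source]
    have hfix : fc a = a := by
      rw [hfcdef, hadef]
      simp only
      rw [min_eq_left hx.le, max_self]
    rw [hfix, hA₀, hadef]
    exact ⟨rfl, ⟨(haΩ.1.2).1.le, (haΩ.1.2).2.le⟩⟩
  · beta_reduce
    have : Set.projIcc (0:ℝ) 1 zero_le_one 1 = 1 := Set.projIcc_right zero_le_one
    rw [this, p.target]
    have hfix : fc b = b := by
      rw [hfcdef, hbdef]
      simp only
      rw [min_self, max_eq_right hx.le]
    rw [hfix, hA₁, hbdef]
    exact ⟨rfl, ⟨(hbΩ.1.2).1.le, (hbΩ.1.2).2.le⟩⟩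
  · intro t ht
    beta_reduce
    have hq := hp (Set.projIcc (0:ℝ) 1 zero_le_one t)
    set q : ℝ × ℝ := p (Set.projIcc (0:ℝ) 1 zero_le_one t) with hqdef
    obtain ⟨⟨-, hq2⟩, hq3⟩ := hq
    constructor
    · rw [hD]
      refine ⟨⟨le_max_left _ _, max_le hx.le (min_le_right _ _)⟩, hq2.1.le, hq2.2.le⟩
    · intro hmem
      apply hq3
      rcases hmem with (hmem | hmem) | hmem
      · rw [← hunion] at hmem
        rcases hmem with hmem | hmem
        · exact Or.inl (Or.inl hmem)
        · exact Or.inr (Or.inl hmem)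
      · exact Or.inl (Or.inr hmem)
      · exact Or.inr (Or.inr hmem)
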